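/- Let M = (m_1,...,m_k) be a tuple of positive integers such that every m_i is odd and k is divisible by 3. Then, writing the continued fraction value cf(M) in lowest terms as β/α with α > 0, the denominator α is odd (so that the corresponding 2-bridge link K(α,β) is a knot). -/

import Mathlib

/-- Continued fraction value of a list of rationals:
`cf [n₁,...,n_k] = 1/(n₁ + 1/(n₂ + ... + 1/n_k))`. -/
def cf : List ℚ → ℚ
  | [] => 0
  | n :: L => 1 / (n + cf L)

lemma cf_aux (M : List ℕ) (hpos : ∀ m ∈ M, 0 < m) (hodd : ∀ m ∈ M, Odd m) :
    ∃ p q : ℕ, Nat.Coprime p q ∧ 0 < q ∧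
      cf (M.map (fun m => (m : ℚ))) = (p : ℚ) / q ∧
      p % 2 = (if M.length % 3 = 0 then 0 else 1) ∧
      q % 2 = (if M.length % 3 = 2 then 0 else 1) := by
  induction M with
  | nil => exact ⟨0, 1, by simp [Nat.Coprime], by simp, by simp [cf], by simp, by simp⟩
  | cons m M ih =>
    obtain ⟨p, q, hcop, hq, hcf, hp2, hq2⟩ :=
      ih (fun x hx => hpos x (List.mem_cons_of_mem _ hx))
        (fun x hx => hodd x (List.mem_cons_of_mem _ hx))
    have hm : 0 < m := hpos m List.mem_cons_self
    have hmo : m % 2 = 1 := Nat.odd_iff.mp (hodd m List.mem_cons_self)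
    have hmul : (m * q) % 2 = (m % 2) * (q % 2) % 2 := Nat.mul_mod m q 2
    rw [hmo] at hmul
    have hr : M.length % 3 = 0 ∨ M.length % 3 = 1 ∨ M.length % 3 = 2 := by omega
    refine ⟨q, m * q + p, ?_, by positivity, ?_, ?_, ?_⟩
    · have h := (Nat.coprime_add_mul_right_right q p m).mpr hcop.symm
      rwa [show p + m * q = m * q + p by ring] at h
    · have hq' : (0:ℚ) < q := by exact_mod_cast hq
      have hd : (0:ℚ) < (m:ℚ) * q + p := by positivity
      have hden : (0:ℚ) < (m:ℚ) + (p:ℚ)/q := by positivity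
      have hstep : cf ((m::M).map (fun m => (m:ℚ)))
          = 1 / ((m:ℚ) + cf (M.map (fun m => (m:ℚ)))) := rfl
      rw [hstep, hcf, div_eq_div_iff hden.ne' (by positivity)]
      push_cast
      field_simp
    · rcases hr with h | h | h <;>
        [ (have h1 : (M.length + 1) % 3 = 1 := by omega);
          (have h1 : (M.length + 1) % 3 = 2 := by omega);
          (have h1 : (M.length + 1) % 3 = 0 := by omega)] <;>
        simp only [List.length_cons, h, h1] at hq2 ⊢ <;> norm_num at hq2 ⊢ <;> omega
    · rcases hr with h | h | h <;>
        [ (have h1 : (M.length + 1) % 3 = 1 := by omega);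
          (have h1 : (M.length + 1) % 3 = 2 := by omega);
          (have h1 : (M.length + 1) % 3 = 0 := by omega)] <;>
        simp only [List.length_cons, h, h1] at hp2 hq2 ⊢ <;> norm_num at hp2 hq2 ⊢ <;> omega

theorem den_odd_of_all_odd_of_three_dvd_length (M : List ℕ)
    (hpos : ∀ m ∈ M, 0 < m) (hodd : ∀ m ∈ M, Odd m) (hlen : 3 ∣ M.length) :
    Odd (cf (M.map (fun m => (m : ℚ)))).den := by
  obtain ⟨p, q, hcop, hq, hcf, hp2, hq2⟩ := cf_aux M hpos hodd
  have hl : M.length % 3 = 0 := Nat.eq_zero_of_dvd_of_lt hlen |> fun _ => by omega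
  rw [hl] at hq2
  simp at hq2
  have hden : (cf (M.map (fun m => (m : ℚ)))).den = q := by
    rw [hcf]
    have := Rat.den_div_eq_of_coprime (a := (p:ℤ)) (b := (q:ℤ)) (by exact_mod_cast hq)
      (by simpa using hcop)
    push_cast at this ⊢
    exact_mod_cast this
  rw [hden]
  exact Nat.odd_iff.mpr hq2
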